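/- Let Ω₀ ⊂ ℝ^d be open and convex, and let Φ_j : Ω₀ → ℝ be a sequence of differentiable functions converging uniformly on Ω₀ to a differentiable function Φ₀, such that for a fixed constant C, every function X ↦ Φ_j(X) - C|X - X_j|² is concave on Ω₀ (for some points X_j ∈ Ω₀ with X_j → X₀ ∈ Ω₀). Then ∇Φ_j(X_j) → ∇Φ₀(X₀). -/

import Mathlib

open Filter Topology

/-- A differentiable concave function lies below its tangent. -/
lemma concaveOn_le_tangent {E : Type*} [NormedAddCommGroup E] [NormedSpace ℝ E]
    {s : Set E} {g : E → ℝ} (hg : ConcaveOn ℝ s g)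
    {x y : E} (hx : x ∈ s) (hy : y ∈ s) (hd : DifferentiableAt ℝ g x) :
    g y ≤ g x + fderiv ℝ g x (y - x) := by
  set L : ℝ := fderiv ℝ g x (y - x) with hL
  set c : ℝ → E := fun t => x + t • (y - x) with hc
  have hc' : ∀ t : ℝ, HasDerivAt c (y - x) t := by
    intro t
    simpa [hc] using ((hasDerivAt_id t).smul_const (y - x)).const_add x
  have hc0 : c 0 = x := by simp [hc]
  have hh : HasDerivAt (g ∘ c) L 0 := by
    refine HasFDerivAt.comp_hasDerivAt 0 ?_ (hc' 0)
    rw [hc0]; exact hd.hasFDerivAt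
  have hslope : Tendsto (slope (g ∘ c) 0) (𝓝[>] (0:ℝ)) (𝓝 L) :=
    (hasDerivAt_iff_tendsto_slope.mp hh).mono_left
      (nhdsWithin_mono _ fun t ht => ne_of_gt ht)
  have key : ∀ᶠ t in 𝓝[>] (0:ℝ), g y - g x ≤ slope (g ∘ c) 0 t := by
    filter_upwards [Ioo_mem_nhdsGT (zero_lt_one : (0:ℝ) < 1)]
      with t ht
    have ht0 : 0 < t := ht.1
    have ht1 : t < 1 := ht.2
    have hcomb := hg.2 hx hy (by linarith : (0:ℝ) ≤ 1 - t) ht0.le (by ring)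
    have hct : c t = (1 - t) • x + t • y := by
      simp [hc, smul_sub, sub_smul]; abel
    have hcb : (1 - t) * g x + t * g y ≤ g (c t) := by
      rw [hct]; simpa [smul_eq_mul] using hcomb
    have hs : slope (g ∘ c) 0 t = (g (c t) - g x) / t := by
      simp [slope_def_field, hc0, Function.comp]
    rw [hs, le_div_iff₀ ht0]
    nlinarith
  have := ge_of_tendsto hslope key
  linarith

/-- The quadratic `X ↦ C‖X - a‖²` has zero derivative at `a`. -/
lemma hasFDerivAt_quad {E : Type*} [NormedAddCommGroup E] [InnerProductSpace ℝ E]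
    (C : ℝ) (a : E) :
    HasFDerivAt (fun X => C * ‖X - a‖ ^ 2) (0 : E →L[ℝ] ℝ) a := by
  have h1 : HasFDerivAt (fun X : E => X - a) (ContinuousLinearMap.id ℝ E) a :=
    (hasFDerivAt_id a).sub_const a
  have h2 : HasFDerivAt (fun X : E => (inner ℝ (X - a) (X - a) : ℝ))
      ((fderivInnerCLM ℝ (a - a, a - a)).comp
        ((ContinuousLinearMap.id ℝ E).prod (ContinuousLinearMap.id ℝ E))) a :=
    h1.inner ℝ h1
  have h3 : ((fderivInnerCLM ℝ ((a - a : E), (a - a : E))).comp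
      ((ContinuousLinearMap.id ℝ E).prod (ContinuousLinearMap.id ℝ E))) = 0 := by
    ext v
    simp [fderivInnerCLM_apply]
  rw [h3] at h2
  have h4 : (fun X : E => C * ‖X - a‖ ^ 2) =
      fun X : E => C * (inner ℝ (X - a) (X - a) : ℝ) := by
    funext X; rw [real_inner_self_eq_norm_sq]
  rw [h4]
  simpa using h2.const_mul C

set_option maxHeartbeats 1000000 in
/-- C¹ convergence of uniformly semi-concave functions: if differentiable `Φ_j`
converge uniformly on an open convex set to a differentiable `Φ₀`, each
`Φ_j(X) - C|X - X_j|²` is concave, and `X_j → X₀`, then `∇Φ_j(X_j) → ∇Φ₀(X₀)`. -/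
theorem semiconcave_gradient_convergence {d : ℕ}
    (Ω₀ : Set (EuclideanSpace ℝ (Fin d))) (hopen : IsOpen Ω₀) (hconv : Convex ℝ Ω₀)
    (Φ : ℕ → EuclideanSpace ℝ (Fin d) → ℝ) (Φ₀ : EuclideanSpace ℝ (Fin d) → ℝ)
    (Xj : ℕ → EuclideanSpace ℝ (Fin d)) (X₀ : EuclideanSpace ℝ (Fin d))
    (hX₀ : X₀ ∈ Ω₀) (hXj : ∀ j, Xj j ∈ Ω₀)
    (hXjlim : Filter.Tendsto Xj Filter.atTop (nhds X₀))
    (hdiff : ∀ j, DifferentiableOn ℝ (Φ j) Ω₀)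
    (hdiff₀ : DifferentiableOn ℝ Φ₀ Ω₀)
    (hunif : TendstoUniformlyOn (fun j x => Φ j x) Φ₀ Filter.atTop Ω₀)
    (C : ℝ)
    (hconc : ∀ j, ConcaveOn ℝ Ω₀ (fun X => Φ j X - C * ‖X - Xj j‖ ^ 2)) :
    Filter.Tendsto (fun j => fderiv ℝ (Φ j) (Xj j)) Filter.atTop
      (nhds (fderiv ℝ Φ₀ X₀)) := by
  classical
  have hDA : ∀ j, DifferentiableAt ℝ (Φ j) (Xj j) := fun j =>
    (hdiff j).differentiableAt (hopen.mem_nhds (hXj j))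
  have hDA₀ : DifferentiableAt ℝ Φ₀ X₀ := hdiff₀.differentiableAt (hopen.mem_nhds hX₀)
  -- key tangent inequality
  have hKI : ∀ j, ∀ Y ∈ Ω₀, Φ j Y - C * ‖Y - Xj j‖ ^ 2 ≤
      Φ j (Xj j) + fderiv ℝ (Φ j) (Xj j) (Y - Xj j) := by
    intro j Y hY
    have hdg : HasFDerivAt (fun X => Φ j X - C * ‖X - Xj j‖ ^ 2)
        (fderiv ℝ (Φ j) (Xj j) - 0) (Xj j) :=
      (hDA j).hasFDerivAt.sub (hasFDerivAt_quad C (Xj j))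
    have h := concaveOn_le_tangent (hconc j) (hXj j) hY hdg.differentiableAt
    rw [hdg.fderiv] at h
    simpa using h
  -- radius
  obtain ⟨ε, hε, hball⟩ := Metric.isOpen_iff.mp hopen X₀ hX₀
  obtain ⟨r, hr0, hball2⟩ : ∃ r : ℝ, 0 < r ∧ Metric.closedBall X₀ (2 * r) ⊆ Ω₀ := by
    refine ⟨ε / 3, by positivity, fun z hz => hball ?_⟩
    rw [Metric.mem_ball]
    have := Metric.mem_closedBall.mp hz
    linarith
  -- bound on Φ₀ over the ball
  have hcpt : IsCompact (Metric.closedBall X₀ (2 * r)) := isCompact_closedBall _ _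
  obtain ⟨M, hM⟩ := hcpt.exists_bound_of_continuousOn (hdiff₀.continuousOn.mono hball2)
  have hM0 : 0 ≤ M := le_trans (norm_nonneg _)
    (hM X₀ (Metric.mem_closedBall_self (by linarith)))
  set K : ℝ := 2 * (M + 1) / r + |C| * r with hK
  have hK0 : 0 ≤ K := by
    apply add_nonneg
    · exact div_nonneg (by linarith) hr0.le
    · exact mul_nonneg (abs_nonneg C) hr0.le
  -- eventual bounds
  have h1 : ∀ᶠ j in atTop, ∀ x ∈ Ω₀, dist (Φ₀ x) (Φ j x) < 1 :=
    Metric.tendstoUniformlyOn_iff.mp hunif 1 one_pos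
  have h2 : ∀ᶠ j in atTop, Xj j ∈ Metric.closedBall X₀ r :=
    hXjlim.eventually_mem (Metric.closedBall_mem_nhds X₀ hr0)
  -- bound on the gradients
  have hbound : ∀ᶠ j in atTop, ‖fderiv ℝ (Φ j) (Xj j)‖ ≤ K := by
    filter_upwards [h1, h2] with j hj1 hj2
    refine ContinuousLinearMap.opNorm_le_bound _ hK0 fun v => ?_
    rcases eq_or_ne v 0 with rfl | hv
    · simp
    have hv0 : 0 < ‖v‖ := norm_pos_iff.mpr hv
    set u : EuclideanSpace ℝ (Fin d) := (r / ‖v‖) • v with hu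
    have hun : ‖u‖ = r := by
      rw [hu, norm_smul, Real.norm_eq_abs, abs_of_pos (by positivity)]
      field_simp
    have hXjball : ‖Xj j - X₀‖ ≤ r := by
      have := Metric.mem_closedBall.mp hj2
      rwa [dist_eq_norm] at this
    have hmem : ∀ w : EuclideanSpace ℝ (Fin d), ‖w‖ = r → Xj j + w ∈ Ω₀ ∧
        Xj j + w ∈ Metric.closedBall X₀ (2 * r) := by
      intro w hw
      have hB : Xj j + w ∈ Metric.closedBall X₀ (2 * r) := by
        rw [Metric.mem_closedBall, dist_eq_norm]
        calc ‖Xj j + w - X₀‖ = ‖(Xj j - X₀) + w‖ := by rw [add_sub_right_comm]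
          _ ≤ ‖Xj j - X₀‖ + ‖w‖ := norm_add_le _ _
          _ ≤ 2 * r := by rw [hw]; linarith
      exact ⟨hball2 hB, hB⟩
    have hFbd : ∀ z ∈ Metric.closedBall X₀ (2 * r), z ∈ Ω₀ → |Φ j z| ≤ M + 1 := by
      intro z hz hz'
      have hd := hj1 z hz'
      rw [Real.dist_eq] at hd
      have := hM z hz
      rw [Real.norm_eq_abs] at this
      calc |Φ j z| = |Φ₀ z + (Φ j z - Φ₀ z)| := by ring_nf
        _ ≤ |Φ₀ z| + |Φ j z - Φ₀ z| := abs_add_le _ _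
        _ ≤ M + 1 := by
            rw [abs_sub_comm]
            linarith [le_of_lt hd]
    obtain ⟨hp, hpB⟩ := hmem u hun
    obtain ⟨hm, hmB⟩ := hmem (-u) (by rwa [norm_neg])
    have hXjmem : Xj j ∈ Metric.closedBall X₀ (2 * r) := by
      rw [Metric.mem_closedBall, dist_eq_norm]
      linarith
    have hbp := hFbd _ hpB hp
    have hbm := hFbd _ hmB hm
    have hbx := hFbd _ hXjmem (hXj j)
    set L := fderiv ℝ (Φ j) (Xj j) with hLdef
    have hkp := hKI j _ hp
    have hkm := hKI j _ hm
    have hsp : Xj j + u - Xj j = u := by abel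
    have hsm : Xj j + -u - Xj j = -u := by abel
    rw [hsp, hun] at hkp
    rw [hsm, norm_neg, hun] at hkm
    have hLu : L u = (r / ‖v‖) * L v := by
      rw [hu, map_smul, smul_eq_mul]
    have hLmu : L (-u) = -((r / ‖v‖) * L v) := by
      rw [map_neg, hLu]
    rw [hLu] at hkp
    rw [hLmu] at hkm
    have hCr : -(|C| * r ^ 2) ≤ C * r ^ 2 ∧ C * r ^ 2 ≤ |C| * r ^ 2 := by
      constructor <;> nlinarith [abs_nonneg C, neg_abs_le C, le_abs_self C, sq_nonneg r]
    have hup : (r / ‖v‖) * L v ≤ 2 * (M + 1) + |C| * r ^ 2 := by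
      have := abs_le.mp hbm
      have := abs_le.mp hbx
      linarith [hCr.1, hCr.2]
    have hdown : -(2 * (M + 1) + |C| * r ^ 2) ≤ (r / ‖v‖) * L v := by
      have := abs_le.mp hbp
      have := abs_le.mp hbx
      linarith [hCr.1, hCr.2]
    rw [Real.norm_eq_abs]
    have habs' : (r / ‖v‖) * |L v| ≤ 2 * (M + 1) + |C| * r ^ 2 := by
      rcases abs_cases (L v) with ⟨h, -⟩ | ⟨h, -⟩
      · rw [h]; exact hup
      · rw [h, mul_neg]; linarith
    have hrecip : |L v| = (‖v‖ / r) * ((r / ‖v‖) * |L v|) := by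
      field_simp
    rw [hrecip]
    have h9 : (‖v‖ / r) * ((r / ‖v‖) * |L v|) ≤ (‖v‖ / r) * (2 * (M + 1) + |C| * r ^ 2) :=
      mul_le_mul_of_nonneg_left habs' (by positivity)
    refine le_trans h9 (le_of_eq ?_)
    rw [hK]; field_simp
  -- Φ j (Xj j) → Φ₀ X₀
  have hΦXj : Tendsto (fun j => Φ j (Xj j)) atTop (𝓝 (Φ₀ X₀)) := by
    have hc : Tendsto (fun j => Φ₀ (Xj j)) atTop (𝓝 (Φ₀ X₀)) :=
      ((hdiff₀.continuousOn.continuousAt (hopen.mem_nhds hX₀)).tendsto).comp hXjlim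
    have hz : Tendsto (fun j => Φ j (Xj j) - Φ₀ (Xj j)) atTop (𝓝 0) := by
      rw [NormedAddCommGroup.tendsto_nhds_zero]
      intro δ hδ
      filter_upwards [Metric.tendstoUniformlyOn_iff.mp hunif δ hδ] with j hj
      have := hj (Xj j) (hXj j)
      rw [Real.dist_eq, abs_sub_comm] at this
      simpa [Real.norm_eq_abs] using this
    have := hz.add hc
    simpa using this
  -- subsequence argument
  refine tendsto_of_subseq_tendsto fun ns hns => ?_
  obtain ⟨k₀, hk₀⟩ := eventually_atTop.mp (hns.eventually hbound)
  set y : ℕ → (EuclideanSpace ℝ (Fin d) →L[ℝ] ℝ) := fun k => fderiv ℝ (Φ (ns (k + k₀))) (Xj (ns (k + k₀))) with hy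
  have hymem : ∀ k, y k ∈ Metric.closedBall (0 : EuclideanSpace ℝ (Fin d) →L[ℝ] ℝ) K := by
    intro k
    rw [Metric.mem_closedBall, dist_zero_right]
    exact hk₀ (k + k₀) (Nat.le_add_left _ _)
  obtain ⟨a, -, φ, hφmono, hφlim⟩ :=
    (isCompact_closedBall (0 : EuclideanSpace ℝ (Fin d) →L[ℝ] ℝ) K).tendsto_subseq hymem
  set σ : ℕ → ℕ := fun k => ns (φ k + k₀) with hσdef
  have hσ : Tendsto σ atTop atTop :=
    hns.comp (tendsto_atTop_mono (fun k => le_trans (hφmono.id_le k) (Nat.le_add_right _ _)) tendsto_id)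
  have hLσ : Tendsto (fun k => fderiv ℝ (Φ (σ k)) (Xj (σ k))) atTop (𝓝 a) := hφlim
  have hXσ : Tendsto (fun k => Xj (σ k)) atTop (𝓝 X₀) := hXjlim.comp hσ
  -- limit inequality
  have hlim : ∀ Y ∈ Ω₀, Φ₀ Y - C * ‖Y - X₀‖ ^ 2 ≤ Φ₀ X₀ + a (Y - X₀) := by
    intro Y hY
    have t1 : Tendsto (fun k => Φ (σ k) Y) atTop (𝓝 (Φ₀ Y)) :=
      (hunif.tendsto_at hY).comp hσ
    have tsub : Tendsto (fun k => Y - Xj (σ k)) atTop (𝓝 (Y - X₀)) :=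
      tendsto_const_nhds.sub hXσ
    have t2 : Tendsto (fun k => ‖Y - Xj (σ k)‖ ^ 2) atTop (𝓝 (‖Y - X₀‖ ^ 2)) :=
      (tsub.norm).pow 2
    have t4 : Tendsto (fun k => (fderiv ℝ (Φ (σ k)) (Xj (σ k))) (Y - Xj (σ k)))
        atTop (𝓝 (a (Y - X₀))) :=
      (isBoundedBilinearMap_apply.continuous.tendsto (a, Y - X₀)).comp
        (hLσ.prodMk_nhds tsub)
    refine le_of_tendsto_of_tendsto' (t1.sub (t2.const_mul C))
      ((hΦXj.comp hσ).add t4) fun k => hKI (σ k) Y hY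
  -- identification of the limit
  have haT : fderiv ℝ Φ₀ X₀ = a := by
    have main : ∀ v, fderiv ℝ Φ₀ X₀ v ≤ a v := by
      intro v
      set h : ℝ → ℝ := fun t => Φ₀ (X₀ + t • v) with hhdef
      have hc' : HasDerivAt (fun t : ℝ => X₀ + t • v) v 0 := by
        simpa using ((hasDerivAt_id (0:ℝ)).smul_const v).const_add X₀
      have hder : HasDerivAt h (fderiv ℝ Φ₀ X₀ v) 0 := by
        refine HasFDerivAt.comp_hasDerivAt 0 ?_ hc'
        simpa using hDA₀.hasFDerivAt
      have hslope : Tendsto (slope h 0) (𝓝[>] (0:ℝ)) (𝓝 (fderiv ℝ Φ₀ X₀ v)) :=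
        (hasDerivAt_iff_tendsto_slope.mp hder).mono_left
          (nhdsWithin_mono _ fun t ht => ne_of_gt ht)
      have hub : Tendsto (fun t : ℝ => a v + C * t * ‖v‖ ^ 2) (𝓝[>] (0:ℝ)) (𝓝 (a v)) := by
        have : Tendsto (fun t : ℝ => a v + C * t * ‖v‖ ^ 2) (𝓝 0)
            (𝓝 (a v + C * 0 * ‖v‖ ^ 2)) := by
          apply Tendsto.add tendsto_const_nhds
          exact (tendsto_id.const_mul C).mul_const _
        simpa using this.mono_left nhdsWithin_le_nhds
      refine le_of_tendsto_of_tendsto hslope hub ?_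
      set δ : ℝ := r / (‖v‖ + 1) with hδdef
      have hδ0 : 0 < δ := by positivity
      filter_upwards [Ioo_mem_nhdsGT hδ0] with t ht
      have ht0 : 0 < t := ht.1
      have htδ : t < δ := ht.2
      have hmem : X₀ + t • v ∈ Ω₀ := by
        apply hball2
        rw [Metric.mem_closedBall, dist_eq_norm]
        have : ‖X₀ + t • v - X₀‖ = t * ‖v‖ := by
          rw [add_sub_cancel_left, norm_smul, Real.norm_eq_abs, abs_of_pos ht0]
        rw [this]
        have h5 : t * ‖v‖ ≤ t * (‖v‖ + 1) := by nlinarith [norm_nonneg v]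
        have h6 : t * (‖v‖ + 1) < r := by
          rw [hδdef] at htδ
          rw [lt_div_iff₀ (by positivity)] at htδ
          linarith
        linarith
      have hin := hlim _ hmem
      rw [add_sub_cancel_left] at hin
      have hnsm : ‖t • v‖ ^ 2 = t ^ 2 * ‖v‖ ^ 2 := by
        rw [norm_smul, Real.norm_eq_abs, abs_of_pos ht0, mul_pow]
      have hasm : a (t • v) = t * a v := by rw [map_smul, smul_eq_mul]
      rw [hnsm, hasm] at hin
      have hh0 : h 0 = Φ₀ X₀ := by simp [hhdef]
      have hht : h t = Φ₀ (X₀ + t • v) := rfl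
      have hsl : slope h 0 t = (h t - h 0) / t := by simp [slope_def_field]
      rw [hsl, div_le_iff₀ ht0, hh0, hht]
      nlinarith [hin]
    refine ContinuousLinearMap.ext fun v => ?_
    have h1 := main v
    have h2 := main (-v)
    rw [map_neg, map_neg] at h2
    linarith
  exact ⟨fun k => φ k + k₀, by rw [haT]; exact hφlim⟩
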